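/- Let B be a type and σ : B → List B with σ(b) ≠ [] for every b : B. Let v : List B be nonempty and let p, s : List B with s ≠ [] be such that v.flatMap σ = p ++ v ++ s. Then there exist an index i < v.length and lists q, r : List B with r ≠ [] such that σ(v[i]) = q ++ [v[i]] ++ r, (v.take i).flatMap σ ++ q = p ++ v.take i, and r ++ (v.drop (i+1)).flatMap σ = (v.drop (i+1)) ++ s. (Existence of a "singular letter" of v whose image contains that letter followed by a nonempty word, established in the proof of the paper's Lemma "genwordspart1" for a word v with no illegal pairs satisfying φ(v) = p*v*s with s nonempty.) -/

import Mathlib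

private lemma split_aux {α : Type*} {a b c d : List α} (h : a ++ b = c ++ d)
    (hl : a.length ≤ c.length) :
    c = a ++ c.drop a.length ∧ b = c.drop a.length ++ d := by
  have h1 : a = c.take a.length := by
    calc a = (a ++ b).take a.length := List.take_left.symm
    _ = (c ++ d).take a.length := by rw [h]
    _ = c.take a.length := List.take_append_of_le_length hl
  constructor
  · conv_lhs => rw [← List.take_append_drop a.length c, ← h1]
  · have h2 : b = (a ++ b).drop a.length := by simp
    rw [h2, h, List.drop_append_of_le_length hl]

/-- Existence of a "singular letter": if `σ` sends every letter to a nonempty list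
and `v.flatMap σ = p ++ v ++ s` with `v` and `s` nonempty, then some letter `v[i]`
occurs in its own image `σ(v[i]) = q ++ [v[i]] ++ r` with `r` nonempty, compatibly
with the decomposition: `(v.take i).flatMap σ ++ q = p ++ v.take i` and
`r ++ (v.drop (i+1)).flatMap σ = v.drop (i+1) ++ s`. -/
theorem exists_singular_letter {B : Type*} (σ : B → List B)
    (hσ : ∀ b : B, σ b ≠ []) (v p s : List B) (hv : v ≠ []) (hs : s ≠ [])
    (h : v.flatMap σ = p ++ v ++ s) :
    ∃ (i : ℕ) (hi : i < v.length) (q r : List B), r ≠ [] ∧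
      σ (v[i]'hi) = q ++ [v[i]'hi] ++ r ∧
      (v.take i).flatMap σ ++ q = p ++ v.take i ∧
      r ++ (v.drop (i + 1)).flatMap σ = v.drop (i + 1) ++ s := by
  classical
  have hn : 0 < v.length := List.length_pos_iff.mpr hv
  have hslen : 0 < s.length := List.length_pos_iff.mpr hs
  let f : ℕ → ℕ := fun j => ((v.take j).flatMap σ).length
  have hstep : ∀ j (hj : j < v.length), f (j + 1) = f j + (σ (v[j]'hj)).length := by
    intro j hj
    show ((v.take (j+1)).flatMap σ).length = ((v.take j).flatMap σ).length + _
    rw [List.take_succ, List.getElem?_eq_getElem hj]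
    rw [Option.toList_some, List.flatMap_append, List.length_append,
      List.flatMap_cons, List.flatMap_nil, List.append_nil]
  have hLlen : f v.length = p.length + v.length + s.length := by
    show ((v.take v.length).flatMap σ).length = _
    rw [List.take_length, h]
    simp; omega
  set i := Nat.findGreatest (fun j => f j ≤ p.length + j) (v.length - 1) with hidef
  have hile : i ≤ v.length - 1 := Nat.findGreatest_le _
  have hiln : i < v.length := lt_of_le_of_lt hile (by omega)
  have hPi : f i ≤ p.length + i :=
    Nat.findGreatest_spec (P := fun j => f j ≤ p.length + j) (m := 0)
      (Nat.zero_le _) (by show ((v.take 0).flatMap σ).length ≤ _; simp)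
  have hnext : p.length + i + 2 ≤ f (i + 1) := by
    rcases le_or_gt (i + 1) (v.length - 1) with hc | hc
    · have hng := Nat.findGreatest_is_greatest (P := fun j => f j ≤ p.length + j)
        (k := i + 1) (by omega) hc
      simp only [not_le] at hng
      omega
    · have heq : i + 1 = v.length := by omega
      have : f (i + 1) = p.length + v.length + s.length := by rw [heq, hLlen]
      omega
  have hv' : v = v.take i ++ v[i] :: v.drop (i + 1) := by
    rw [List.getElem_cons_drop hiln]
    exact (List.take_append_drop i v).symm
  have hflat : (v.take i).flatMap σ ++ (σ (v[i]'hiln) ++ (v.drop (i + 1)).flatMap σ)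
      = (p ++ v.take i) ++ ([v[i]'hiln] ++ (v.drop (i + 1) ++ s)) := by
    calc (v.take i).flatMap σ ++ (σ (v[i]'hiln) ++ (v.drop (i + 1)).flatMap σ)
        = v.flatMap σ := by
          conv_rhs => rw [hv']
          simp only [List.flatMap_append, List.flatMap_cons, List.append_assoc]
      _ = p ++ v ++ s := h
      _ = (p ++ v.take i) ++ ([v[i]'hiln] ++ (v.drop (i + 1) ++ s)) := by
          conv_lhs => rw [hv']
          simp only [List.append_assoc, List.cons_append, List.singleton_append, List.nil_append]
  have hAlen : ((v.take i).flatMap σ).length = f i := rfl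
  have hPlen : (p ++ v.take i).length = p.length + i := by
    simp [List.length_take, Nat.min_eq_left hiln.le]
  have hl1 : ((v.take i).flatMap σ).length ≤ (p ++ v.take i).length := by
    rw [hAlen, hPlen]; exact hPi
  obtain ⟨hsplit1, hsplit2⟩ := split_aux hflat hl1
  set q := (p ++ v.take i).drop ((v.take i).flatMap σ).length with hqdef
  have hqlen : q.length = p.length + i - f i := by
    rw [hqdef, List.length_drop, hAlen, hPlen]
  have hσlen : q.length + 2 ≤ (σ (v[i]'hiln)).length := by
    have := hstep i hiln
    omega
  have hflat2 : (q ++ [v[i]'hiln]) ++ (v.drop (i + 1) ++ s)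
      = σ (v[i]'hiln) ++ (v.drop (i + 1)).flatMap σ := by
    rw [hsplit2]; simp
  have hql1 : (q ++ [v[i]'hiln]).length = q.length + 1 := by simp
  have hl2 : (q ++ [v[i]'hiln]).length ≤ (σ (v[i]'hiln)).length := by omega
  obtain ⟨hsplit3, hsplit4⟩ := split_aux hflat2 hl2
  set r := (σ (v[i]'hiln)).drop (q ++ [v[i]'hiln]).length with hrdef
  have hrlen : 0 < r.length := by
    rw [hrdef, List.length_drop]
    omega
  refine ⟨i, hiln, q, r, ?_, ?_, ?_, ?_⟩
  · exact List.length_pos_iff.mp hrlen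
  · rw [hsplit3]
  · exact hsplit1.symm
  · exact hsplit4.symm
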